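/- Let F be a field and P ∈ F[X₁,…,Xₙ] a polynomial that is not identically zero on {0,1}ⁿ. If w = min{wt(u) : u ∈ {0,1}ⁿ, P(u) ≠ 0}, then deg(P) ≥ w. -/
import Mathlib


/-- The weight of a point of the hypercube: the number of coordinates equal to 1. -/
noncomputable def wt {F : Type*} [Field F] {n : ℕ} (u : Fin n → F) : ℕ :=
  Nat.card {i : Fin n // u i = 1}

open Finset MvPolynomial

lemma wt_indicator {F : Type*} [Field F] {n : ℕ} (T : Finset (Fin n)) :
    wt (fun i => if i ∈ T then (1:F) else 0) = T.card := by
  classical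
  rw [wt, Nat.card_eq_fintype_card, Fintype.card_subtype]
  congr 1
  ext i
  simp only [mem_filter, mem_univ, true_and]
  by_cases h : i ∈ T <;> simp [h]

lemma inner_sum_eq_zero {F : Type*} [Field F] {n : ℕ} {S m : Finset (Fin n)}
    (hm : m ≠ S) :
    ∑ T ∈ S.powerset, (-1:F)^T.card * (if m ⊆ T then 1 else 0) = 0 := by
  by_cases hms : m ⊆ S
  · have h1 : ∑ T ∈ S.powerset, (-1:F)^T.card * (if m ⊆ T then 1 else 0)
        = ∑ T ∈ S.powerset.filter (fun T => m ⊆ T), (-1:F)^T.card := by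
      rw [Finset.sum_filter]
      refine Finset.sum_congr rfl fun T _ => ?_
      by_cases h : m ⊆ T <;> simp [h]
    have h2 : ∑ T ∈ S.powerset.filter (fun T => m ⊆ T), (-1:F)^T.card
        = ∑ A ∈ (S \ m).powerset, (-1:F)^((A ∪ m).card) := by
      refine Finset.sum_bij' (fun T _ => T \ m) (fun A _ => A ∪ m) ?_ ?_ ?_ ?_ ?_
      · intro T hT
        simp only [mem_filter, mem_powerset] at hT
        exact mem_powerset.mpr (sdiff_subset_sdiff hT.1 le_rfl)
      · intro A hA
        simp only [mem_powerset] at hA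
        refine mem_filter.mpr ⟨mem_powerset.mpr (union_subset (hA.trans (sdiff_subset)) hms), subset_union_right⟩
      · intro T hT
        simp only [mem_filter, mem_powerset] at hT
        exact sdiff_union_of_subset hT.2
      · intro A hA
        simp only [mem_powerset] at hA
        have hd : Disjoint A m := disjoint_of_subset_left hA sdiff_disjoint
        show (A ∪ m) \ m = A
        rw [union_sdiff_right, sdiff_eq_self_of_disjoint hd]
      · intro T hT
        simp only [mem_filter, mem_powerset] at hT
        rw [sdiff_union_of_subset hT.2]
    have h3 : ∀ A ∈ (S \ m).powerset, ((A ∪ m).card) = A.card + m.card := by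
      intro A hA
      simp only [mem_powerset] at hA
      exact card_union_of_disjoint (disjoint_of_subset_left hA sdiff_disjoint)
    rw [h1, h2, Finset.sum_congr rfl (fun A hA => by rw [h3 A hA, pow_add])]
    rw [← Finset.sum_mul]
    have hne : (S \ m).Nonempty := by
      rw [sdiff_nonempty]
      intro h
      exact hm (subset_antisymm hms h)
    have := Finset.sum_powerset_neg_one_pow_card_of_nonempty hne
    have hz : ∑ A ∈ (S \ m).powerset, (-1:F)^A.card = 0 := by
      calc ∑ A ∈ (S \ m).powerset, (-1:F)^A.card
          = ((∑ A ∈ (S \ m).powerset, (-1:ℤ)^A.card : ℤ) : F) := by push_cast; rfl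
        _ = 0 := by rw [this]; simp
    rw [hz, zero_mul]
  · refine Finset.sum_eq_zero fun T hT => ?_
    have : ¬ m ⊆ T := fun h => hms (h.trans (mem_powerset.mp hT))
    simp [this]

theorem min_weight_bound {F : Type*} [Field F] {n w : ℕ}
    (P : MvPolynomial (Fin n) F)
    (hw : IsLeast {m : ℕ | ∃ u : Fin n → F, (∀ i, u i = 0 ∨ u i = 1) ∧
      MvPolynomial.eval u P ≠ 0 ∧ wt u = m} w) :
    w ≤ P.totalDegree := by
  classical
  obtain ⟨⟨u, hu01, huP, huw⟩, hlb⟩ := hw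
  set S : Finset (Fin n) := Finset.univ.filter (fun i => u i = 1) with hS
  have hu : u = fun i => if i ∈ S then (1:F) else 0 := by
    funext i
    rcases hu01 i with h | h <;> simp [hS, h]
  have hwS : w = S.card := by rw [← huw, hu, wt_indicator]
  set L : F := ∑ T ∈ S.powerset,
    (-1:F)^T.card * MvPolynomial.eval (fun i => if i ∈ T then (1:F) else 0) P with hLdef
  have hL : L = (-1:F)^S.card * MvPolynomial.eval u P := by
    rw [hLdef, Finset.sum_eq_single_of_mem S (Finset.mem_powerset_self S)]
    · rw [hu]
    · intro T hT hTne
      have hcard : T.card < S.card :=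
        Finset.card_lt_card (lt_of_le_of_ne (mem_powerset.mp hT) hTne)
      have hz : MvPolynomial.eval (fun i => if i ∈ T then (1:F) else 0) P = 0 := by
        by_contra h
        have : w ≤ T.card := hlb ⟨fun i => if i ∈ T then (1:F) else 0,
          fun i => by by_cases hi : i ∈ T <;> simp [hi], h, wt_indicator T⟩
        omega
      rw [hz, mul_zero]
  have hL0 : L ≠ 0 := by
    rw [hL]
    exact mul_ne_zero (pow_ne_zero _ (neg_ne_zero.mpr one_ne_zero)) huP
  have hprod : ∀ (T : Finset (Fin n)) (m : Fin n →₀ ℕ),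
      (∏ i, (if i ∈ T then (1:F) else 0) ^ m i) = if m.support ⊆ T then 1 else 0 := by
    intro T m
    by_cases h : m.support ⊆ T
    · rw [if_pos h]
      refine Finset.prod_eq_one fun i _ => ?_
      by_cases hiT : i ∈ T
      · simp [hiT]
      · have hmi : m i = 0 := by
          by_contra hmi
          exact hiT (h (Finsupp.mem_support_iff.mpr hmi))
        simp [hiT, hmi]
    · rw [if_neg h]
      obtain ⟨i, him, hiT⟩ := Finset.not_subset.mp h
      refine Finset.prod_eq_zero (Finset.mem_univ i) ?_
      rw [if_neg hiT]
      exact zero_pow (Finsupp.mem_support_iff.mp him)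
  have hswap : L = ∑ m ∈ P.support, MvPolynomial.coeff m P *
      ∑ T ∈ S.powerset, (-1:F)^T.card * (if m.support ⊆ T then 1 else 0) := by
    rw [hLdef]
    have : ∀ T ∈ S.powerset,
        (-1:F)^T.card * MvPolynomial.eval (fun i => if i ∈ T then (1:F) else 0) P
        = ∑ m ∈ P.support, MvPolynomial.coeff m P *
            ((-1:F)^T.card * (if m.support ⊆ T then 1 else 0)) := by
      intro T _
      rw [MvPolynomial.eval_eq', Finset.mul_sum]
      refine Finset.sum_congr rfl fun m _ => ?_
      rw [hprod T m]
      ring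
    rw [Finset.sum_congr rfl this, Finset.sum_comm]
    exact Finset.sum_congr rfl fun m _ => by rw [Finset.mul_sum]
  obtain ⟨m, hmem, hmne⟩ : ∃ m ∈ P.support, MvPolynomial.coeff m P *
      (∑ T ∈ S.powerset, (-1:F)^T.card * (if m.support ⊆ T then 1 else 0)) ≠ 0 := by
    by_contra h
    push_neg at h
    exact hL0 (hswap.trans (Finset.sum_eq_zero h))
  have hmS : m.support = S := by
    by_contra h
    exact hmne (by rw [inner_sum_eq_zero h, mul_zero])
  have h1 : S.card ≤ m.sum fun _ e => e := by
    rw [Finsupp.sum, ← hmS]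
    calc m.support.card = ∑ _i ∈ m.support, 1 := by simp
      _ ≤ ∑ i ∈ m.support, m i :=
        Finset.sum_le_sum fun i hi => Nat.one_le_iff_ne_zero.mpr (Finsupp.mem_support_iff.mp hi)
  rw [hwS]
  exact h1.trans (MvPolynomial.le_totalDegree hmem)
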